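/- Let H be a complex Hilbert space, let t₁ ≤ t₂ be real numbers, let M ≥ 0, and let A : ℝ → B(H) be a family of bounded operators such that (i) for every x ∈ H the map s ↦ A(s)x is continuous on [t₁,t₂], (ii) ‖A(s)‖ ≤ M for all s ∈ [t₁,t₂], and (iii) for Lebesgue-almost every pair (s′,s) ∈ [t₁,t₂] × [t₁,t₂] the composition A(s′)* ∘ A(s) is a compact operator. If B is a continuous linear operator on H satisfying B x = ∫_{t₁}^{t₂} A(s)x ds (Bochner integral in H) for every x ∈ H, then B is a compact operator. -/

import Mathlib

open MeasureTheory Filter Metric Topology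

local notation "⟪" x ", " y "⟫" => @inner ℂ _ _ x y

lemma lemC {H : Type*} [NormedAddCommGroup H] [InnerProductSpace ℂ H] [CompleteSpace H]
    {ι : Type*} {l : Filter ι}
    (K : H →L[ℂ] H) (hK : IsCompactOperator K)
    (w : ι → H) (C : ℝ) (hw : ∀ i, ‖w i‖ ≤ C)
    (hweak : ∀ y : H, Tendsto (fun i => ⟪y, w i⟫) l (𝓝 0)) :
    Tendsto (fun i => K (w i)) l (𝓝 0) := by
  have hS : IsCompact (closure ((K : H →ₗ[ℂ] H) '' Metric.closedBall 0 C)) :=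
    hK.isCompact_closure_image_of_bounded isBounded_closedBall
  refine hS.tendsto_nhds_of_unique_mapClusterPt ?_ ?_
  · refine Eventually.of_forall fun i => subset_closure ?_
    exact ⟨w i, by simpa [mem_closedBall_zero_iff] using hw i, rfl⟩
  · intro c _ hc
    have h1 : MapClusterPt (⟪c, c⟫) l (fun i => ⟪c, K (w i)⟫) := by
      have := hc.continuousAt_comp (f := fun v : H => ⟪c, v⟫)
        ((innerSL ℂ c).continuous.continuousAt)
      exact this
    have h2 : Tendsto (fun i => ⟪c, K (w i)⟫) l (𝓝 0) := by
      have := hweak (ContinuousLinearMap.adjoint K c)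
      simpa [ContinuousLinearMap.adjoint_inner_left] using this
    have h3 : (⟪c, c⟫ : ℂ) = 0 := by
      have : ClusterPt (⟪c, c⟫) (𝓝 (0 : ℂ)) := h1.clusterPt.mono h2
      exact eq_of_nhds_neBot this
    simpa [inner_self_eq_zero] using h3

-- diagonal extraction
lemma lemD {H : Type*} [NormedAddCommGroup H] [InnerProductSpace ℂ H]
    (x : ℕ → H) (hx : ∀ n, ‖x n‖ ≤ 1) :
    ∃ φ : ℕ → ℕ, StrictMono φ ∧ ∀ m : ℕ, ∃ L : ℂ,
      Tendsto (fun n => ⟪x m, x (φ n)⟫) atTop (𝓝 L) := by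
  set s : Set (ℕ → ℂ) := Set.univ.pi (fun _ => Metric.closedBall 0 1) with hs
  have hcomp : IsCompact s := isCompact_univ_pi fun _ => isCompact_closedBall _ _
  have hseq : IsSeqCompact s := hcomp.isSeqCompact
  set g : ℕ → ℕ → ℂ := fun n m => ⟪x m, x n⟫ with hg
  have hmem : ∀ n, g n ∈ s := by
    intro n
    intro m _
    simp only [mem_closedBall_zero_iff]
    calc ‖(⟪x m, x n⟫ : ℂ)‖ ≤ ‖x m‖ * ‖x n‖ := norm_inner_le_norm _ _
      _ ≤ 1 * 1 := mul_le_mul (hx m) (hx n) (norm_nonneg _) zero_le_one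
      _ = 1 := one_mul 1
  obtain ⟨f, -, φ, hφ, hconv⟩ := hseq hmem
  refine ⟨φ, hφ, fun m => ⟨f m, ?_⟩⟩
  exact (tendsto_pi_nhds.mp hconv) m

lemma lemE {H : Type*} [NormedAddCommGroup H] [InnerProductSpace ℂ H] [CompleteSpace H]
    (x : ℕ → H) (hx : ∀ n, ‖x n‖ ≤ 1) (φ : ℕ → ℕ)
    (hgen : ∀ m : ℕ, ∃ L : ℂ, Tendsto (fun n => ⟪x m, x (φ n)⟫) atTop (𝓝 L)) :
    ∀ y : H, ∃ L : ℂ, Tendsto (fun n => ⟪y, x (φ n)⟫) atTop (𝓝 L) := by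
  intro y
  set z : ℕ → H := fun n => x (φ n) with hzdef
  have hz1 : ∀ n, ‖z n‖ ≤ 1 := fun n => hx (φ n)
  have hsp : ∀ w ∈ Submodule.span ℂ (Set.range x),
      ∃ L : ℂ, Tendsto (fun n => ⟪w, z n⟫) atTop (𝓝 L) := by
    intro w hw
    induction hw using Submodule.span_induction with
    | mem w hw => obtain ⟨m, rfl⟩ := hw; exact hgen m
    | zero => exact ⟨0, by simp⟩
    | add u v _ _ ihu ihv =>
        obtain ⟨L1, h1⟩ := ihu; obtain ⟨L2, h2⟩ := ihv
        exact ⟨L1 + L2, by simpa [inner_add_left] using h1.add h2⟩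
    | smul a u _ ihu =>
        obtain ⟨L, h⟩ := ihu
        exact ⟨(starRingEnd ℂ a) * L, by simpa [inner_smul_left, mul_comm] using h.const_mul (starRingEnd ℂ a)⟩
  set N := (Submodule.span ℂ (Set.range x)).topologicalClosure with hN
  haveI : CompleteSpace N :=
    (Submodule.isClosed_topologicalClosure _).completeSpace_coe
  have hzN : ∀ n, z n ∈ N :=
    fun n => Submodule.le_topologicalClosure _ (Submodule.subset_span ⟨φ n, rfl⟩)
  set w : H := (N.orthogonalProjectionOnto y : H) with hw
  have hysplit : ∀ n, (⟪y, z n⟫ : ℂ) = ⟪w, z n⟫ := by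
    intro n
    have horth : y - w ∈ Nᗮ := N.sub_starProjection_mem_orthogonal y
    have h0 : (⟪y - w, z n⟫ : ℂ) = 0 :=
      (Submodule.mem_orthogonal' N _).mp horth _ (hzN n)
    have := inner_sub_left (𝕜 := ℂ) y w (z n)
    rw [h0] at this
    linear_combination -this
  have hwN : w ∈ N := (N.orthogonalProjectionOnto y).2
  have hwcl : w ∈ closure ((Submodule.span ℂ (Set.range x) : Submodule ℂ H) : Set H) := by
    rw [← Submodule.topologicalClosure_coe]; exact hwN
  have hcauchy : CauchySeq (fun n => (⟪w, z n⟫ : ℂ)) := by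
    rw [Metric.cauchySeq_iff]
    intro ε hε
    obtain ⟨u, huspan, hu⟩ := Metric.mem_closure_iff.mp hwcl (ε/4) (by linarith)
    obtain ⟨L, hL⟩ := hsp u huspan
    obtain ⟨N₀, hN₀⟩ := Metric.cauchySeq_iff.mp hL.cauchySeq (ε/2) (by linarith)
    refine ⟨N₀, fun m hm n hn => ?_⟩
    have est : ∀ k, dist (⟪w, z k⟫ : ℂ) (⟪u, z k⟫ : ℂ) ≤ ε/4 := by
      intro k
      rw [dist_eq_norm, ← inner_sub_left]
      calc ‖(⟪w - u, z k⟫ : ℂ)‖ ≤ ‖w - u‖ * ‖z k‖ := norm_inner_le_norm _ _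
        _ ≤ (ε/4) * 1 := by
            apply mul_le_mul _ (hz1 k) (norm_nonneg _) (by linarith)
            rw [← dist_eq_norm]; exact le_of_lt hu
        _ = ε/4 := mul_one _
    calc dist (⟪w, z m⟫ : ℂ) (⟪w, z n⟫ : ℂ)
        ≤ dist (⟪w, z m⟫ : ℂ) (⟪u, z m⟫ : ℂ) + dist (⟪u, z m⟫ : ℂ) (⟪u, z n⟫ : ℂ)
          + dist (⟪u, z n⟫ : ℂ) (⟪w, z n⟫ : ℂ) := dist_triangle4 _ _ _ _
      _ < ε/4 + ε/2 + ε/4 := by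
          have := est m
          have h2 := hN₀ m hm n hn
          have h3 := est n
          rw [dist_comm] at h3
          -- strict: middle is strict
          refine add_lt_add_of_lt_of_le (add_lt_add_of_le_of_lt this h2) h3
      _ = ε := by ring
  obtain ⟨L, hL⟩ := cauchySeq_tendsto_of_complete hcauchy
  exact ⟨L, hL.congr fun n => (hysplit n).symm⟩

-- weakly null differences
lemma lemF {H : Type*} [NormedAddCommGroup H] [InnerProductSpace ℂ H]
    (z : ℕ → H) (hconv : ∀ y : H, ∃ L : ℂ, Tendsto (fun n => ⟪y, z n⟫) atTop (𝓝 L)) :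
    ∀ y : H, Tendsto (fun q : ℕ × ℕ => (⟪y, z q.1 - z q.2⟫ : ℂ)) atTop (𝓝 0) := by
  intro y
  obtain ⟨L, hL⟩ := hconv y
  have hfst : Tendsto (fun q : ℕ × ℕ => (⟪y, z q.1⟫ : ℂ)) atTop (𝓝 L) := by
    rw [← prod_atTop_atTop_eq]
    exact hL.comp tendsto_fst
  have hsnd : Tendsto (fun q : ℕ × ℕ => (⟪y, z q.2⟫ : ℂ)) atTop (𝓝 L) := by
    rw [← prod_atTop_atTop_eq]
    exact hL.comp tendsto_snd
  have := hfst.sub hsnd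
  rw [sub_self] at this
  simpa [inner_sub_right] using this

-- integral identity
lemma lemI {H : Type*} [NormedAddCommGroup H] [InnerProductSpace ℂ H] [CompleteSpace H]
    (t₁ t₂ : ℝ) (ht : t₁ ≤ t₂)
    (A : ℝ → H →L[ℂ] H)
    (hcont : ∀ x : H, ContinuousOn (fun s => A s x) (Set.Icc t₁ t₂))
    (B : H →L[ℂ] H)
    (hB : ∀ x : H, B x = ∫ s in t₁..t₂, A s x) (v : H) :
    (⟪B v, B v⟫ : ℂ)
      = ∫ p in (Set.Icc t₁ t₂ ×ˢ Set.Icc t₁ t₂), ⟪A p.2 v, A p.1 v⟫ ∂(volume : Measure (ℝ × ℝ)) := by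
  set S := Set.Icc t₁ t₂ with hSdef
  set f : ℝ → H := fun s => A s v with hfdef
  have hf : IntegrableOn f S := (hcont v).integrableOn_compact isCompact_Icc
  have hBv : B v = ∫ s in S, f s := by
    rw [hB v, intervalIntegral.integral_of_le ht, hSdef, integral_Icc_eq_integral_Ioc]
  set F : ℝ × ℝ → ℂ := fun p => ⟪f p.2, f p.1⟫ with hFdef
  have hFcont : ContinuousOn F (S ×ˢ S) := by
    apply ContinuousOn.inner
    · exact (hcont v).comp continuous_snd.continuousOn (fun p hp => hp.2)
    · exact (hcont v).comp continuous_fst.continuousOn (fun p hp => hp.1)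
  have hFint : IntegrableOn F (S ×ˢ S) (volume : Measure (ℝ × ℝ)) :=
    hFcont.integrableOn_compact (isCompact_Icc.prod isCompact_Icc)
  rw [Measure.volume_eq_prod] at hFint ⊢
  rw [setIntegral_prod F hFint]
  have inner1 : ∀ a : ℝ, (∫ b in S, F (a, b)) = ⟪B v, f a⟫ := by
    intro a
    have : (∫ b in S, F (a, b)) = ∫ b in S, (starRingEnd ℂ) ⟪f a, f b⟫ := by
      simp only [hFdef, inner_conj_symm]
    rw [this, integral_conj, integral_inner hf, ← hBv]
    exact inner_conj_symm _ _
  simp_rw [inner1]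
  rw [integral_inner hf, ← hBv]

lemma lemG {H : Type*} [NormedAddCommGroup H] [InnerProductSpace ℂ H] [CompleteSpace H]
    (t₁ t₂ : ℝ) (ht : t₁ ≤ t₂) (M : ℝ) (hM : 0 ≤ M)
    (A : ℝ → H →L[ℂ] H)
    (hcont : ∀ x : H, ContinuousOn (fun s => A s x) (Set.Icc t₁ t₂))
    (hbound : ∀ s ∈ Set.Icc t₁ t₂, ‖A s‖ ≤ M)
    (hcompact : ∀ᵐ p : ℝ × ℝ
        ∂((volume : Measure (ℝ × ℝ)).restrict (Set.Icc t₁ t₂ ×ˢ Set.Icc t₁ t₂)),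
      IsCompactOperator (ContinuousLinearMap.adjoint (A p.1) ∘L A p.2))
    (B : H →L[ℂ] H)
    (hB : ∀ x : H, B x = ∫ s in t₁..t₂, A s x)
    (x : ℕ → H) (hx : ∀ n, ‖x n‖ ≤ 1) :
    ∃ φ : ℕ → ℕ, StrictMono φ ∧ CauchySeq (fun n => B (x (φ n))) := by
  obtain ⟨φ, hφ, hgen⟩ := lemD x hx
  have hconv := lemE x hx φ hgen
  set z : ℕ → H := fun n => x (φ n) with hzdef
  have hweak := lemF z hconv
  set w : ℕ × ℕ → H := fun q => z q.1 - z q.2 with hwdef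
  have hwb : ∀ q, ‖w q‖ ≤ 2 := by
    intro q
    have h1 := hx (φ q.1); have h2 := hx (φ q.2)
    calc ‖z q.1 - z q.2‖ ≤ ‖z q.1‖ + ‖z q.2‖ := norm_sub_le _ _
      _ ≤ 2 := by simp only [hzdef]; linarith
  set μ := (volume : Measure (ℝ × ℝ)).restrict (Set.Icc t₁ t₂ ×ˢ Set.Icc t₁ t₂) with hμ
  haveI : IsFiniteMeasure μ := by
    constructor
    rw [hμ, Measure.restrict_apply_univ]
    exact (isCompact_Icc.prod isCompact_Icc).measure_lt_top
  set F : ℕ × ℕ → ℝ × ℝ → ℂ := fun q p => ⟪A p.2 (w q), A p.1 (w q)⟫ with hFdef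
  have hmeas : ∀ q, AEStronglyMeasurable (F q) μ := by
    intro q
    apply ContinuousOn.aestronglyMeasurable _ (measurableSet_Icc.prod measurableSet_Icc)
    exact ContinuousOn.inner
      ((hcont _).comp continuous_snd.continuousOn fun p hp => hp.2)
      ((hcont _).comp continuous_fst.continuousOn fun p hp => hp.1)
  have hbd : ∀ q, ∀ᵐ p ∂μ, ‖F q p‖ ≤ (M * 2) * (M * 2) := by
    intro q
    filter_upwards [ae_restrict_mem (measurableSet_Icc.prod measurableSet_Icc)] with p hp
    have h1 : ‖A p.1 (w q)‖ ≤ M * 2 :=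
      le_trans ((A p.1).le_opNorm _)
        (mul_le_mul (hbound _ hp.1) (hwb q) (norm_nonneg _) hM)
    have h2 : ‖A p.2 (w q)‖ ≤ M * 2 :=
      le_trans ((A p.2).le_opNorm _)
        (mul_le_mul (hbound _ hp.2) (hwb q) (norm_nonneg _) hM)
    calc ‖F q p‖ ≤ ‖A p.2 (w q)‖ * ‖A p.1 (w q)‖ := norm_inner_le_norm _ _
      _ ≤ (M * 2) * (M * 2) := by
          apply mul_le_mul h2 h1 (norm_nonneg _) (by positivity)
  have hlim : ∀ᵐ p ∂μ, Tendsto (fun q => F q p) atTop (𝓝 0) := by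
    filter_upwards [hcompact] with p hK
    have htd : Tendsto (fun q => (ContinuousLinearMap.adjoint (A p.1) ∘L A p.2) (w q))
        atTop (𝓝 0) := lemC _ hK w 2 hwb hweak
    have hEq : ∀ q, F q p = ⟪(ContinuousLinearMap.adjoint (A p.1) ∘L A p.2) (w q), w q⟫ := by
      intro q
      simp [hFdef, ContinuousLinearMap.adjoint_inner_left]
    refine squeeze_zero_norm (fun q => ?_) (by simpa using htd.norm.mul_const 2)
    rw [hEq q]
    calc ‖(⟪(ContinuousLinearMap.adjoint (A p.1) ∘L A p.2) (w q), w q⟫ : ℂ)‖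
          ≤ ‖(ContinuousLinearMap.adjoint (A p.1) ∘L A p.2) (w q)‖ * ‖w q‖ :=
            norm_inner_le_norm _ _
        _ ≤ _ := by
            apply mul_le_mul_of_nonneg_left (hwb q) (norm_nonneg _)
  have hdom := tendsto_integral_filter_of_dominated_convergence
    (μ := μ) (F := F) (f := fun _ => (0 : ℂ)) (bound := fun _ => (M * 2) * (M * 2))
    (Eventually.of_forall hmeas) (Eventually.of_forall hbd) (integrable_const _) hlim
  rw [integral_zero] at hdom
  have hid : ∀ q, (∫ p, F q p ∂μ) = ⟪B (w q), B (w q)⟫ := fun q =>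
    (lemI t₁ t₂ ht A hcont B hB (w q)).symm
  refine ⟨φ, hφ, ?_⟩
  rw [cauchySeq_iff_tendsto_dist_atTop_0]
  have hnorm : ∀ q : ℕ × ℕ,
      dist (B (z q.1)) (B (z q.2)) = Real.sqrt ‖(⟪B (w q), B (w q)⟫ : ℂ)‖ := by
    intro q
    have hsub : B (z q.1) - B (z q.2) = B (w q) := (map_sub B _ _).symm
    rw [dist_eq_norm, hsub, inner_self_eq_norm_sq_to_K, norm_pow]
    simp [Real.sqrt_sq, norm_nonneg]
  have h1 : Tendsto (fun q : ℕ × ℕ => ‖(⟪B (w q), B (w q)⟫ : ℂ)‖) atTop (𝓝 0) := by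
    have := hdom.norm
    simp only [hid] at this
    simpa using this
  have h2 : Tendsto (fun q : ℕ × ℕ => Real.sqrt ‖(⟪B (w q), B (w q)⟫ : ℂ)‖) atTop (𝓝 0) := by
    have := (Real.continuous_sqrt.tendsto 0).comp h1
    simpa [Function.comp_def] using this
  exact h2.congr fun q => (hnorm q).symm

/-- The averaging argument of Lemma 2.1: if `A : ℝ → B(H)` is a strongly continuous,
uniformly bounded family on `[t₁,t₂]` such that `A(s′)* ∘ A(s)` is compact for almost
every pair `(s′,s)`, then the strong-operator integral `B = ∫_{t₁}^{t₂} A(s) ds`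
is a compact operator. -/
theorem stmt0 {H : Type*} [NormedAddCommGroup H] [InnerProductSpace ℂ H] [CompleteSpace H]
    (t₁ t₂ : ℝ) (ht : t₁ ≤ t₂) (M : ℝ) (hM : 0 ≤ M)
    (A : ℝ → H →L[ℂ] H)
    (hcont : ∀ x : H, ContinuousOn (fun s => A s x) (Set.Icc t₁ t₂))
    (hbound : ∀ s ∈ Set.Icc t₁ t₂, ‖A s‖ ≤ M)
    (hcompact : ∀ᵐ p : ℝ × ℝ
        ∂((volume : Measure (ℝ × ℝ)).restrict (Set.Icc t₁ t₂ ×ˢ Set.Icc t₁ t₂)),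
      IsCompactOperator (ContinuousLinearMap.adjoint (A p.1) ∘L A p.2))
    (B : H →L[ℂ] H)
    (hB : ∀ x : H, B x = ∫ s in t₁..t₂, A s x) :
    IsCompactOperator B := by
  have hcompB : IsCompact (closure (⇑B '' Metric.closedBall 0 1)) := by
    apply IsSeqCompact.isCompact
    intro u hu
    have hsel : ∀ n : ℕ, ∃ v ∈ ⇑B '' Metric.closedBall (0 : H) 1,
        dist (u n) v < 1 / (n + 1) := fun n =>
      Metric.mem_closure_iff.mp (hu n) _ (by positivity)
    choose v hv hvd using hsel
    choose xx hxxmem hxxeq using hv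
    have hxb : ∀ n, ‖xx n‖ ≤ 1 := fun n => by
      simpa [mem_closedBall_zero_iff] using hxxmem n
    obtain ⟨φ, hφ, hcs⟩ := lemG t₁ t₂ ht M hM A hcont hbound hcompact B hB xx hxb
    obtain ⟨a, ha⟩ := cauchySeq_tendsto_of_complete hcs
    have hamem : a ∈ closure (⇑B '' Metric.closedBall 0 1) :=
      mem_closure_of_tendsto ha (Eventually.of_forall fun n =>
        ⟨xx (φ n), by simpa [mem_closedBall_zero_iff] using hxb (φ n), rfl⟩)
    refine ⟨a, hamem, φ, hφ, ?_⟩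
    have hdist1 : Tendsto (fun n => dist (u (φ n)) (B (xx (φ n)))) atTop (𝓝 0) := by
      apply squeeze_zero (fun n => dist_nonneg) (g := fun n : ℕ => 1 / (n + 1 : ℝ))
      · intro n
        have h1 : dist (u (φ n)) (B (xx (φ n))) < 1 / (φ n + 1 : ℝ) := by
          have := hvd (φ n); rwa [hxxeq (φ n)]
        refine le_trans h1.le (one_div_le_one_div_of_le (by positivity) ?_)
        have : (n : ℝ) ≤ (φ n : ℝ) := by exact_mod_cast hφ.le_apply
        linarith
      · exact tendsto_one_div_add_atTop_nhds_zero_nat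
    have hdist2 : Tendsto (fun n => dist (B (xx (φ n))) a) atTop (𝓝 0) :=
      tendsto_iff_dist_tendsto_zero.mp ha
    rw [show (u ∘ φ) = fun n => u (φ n) from rfl, tendsto_iff_dist_tendsto_zero]
    apply squeeze_zero (fun n => dist_nonneg)
      (fun n => dist_triangle (u (φ n)) (B (xx (φ n))) a)
    simpa using hdist1.add hdist2
  exact ⟨closure (⇑B '' Metric.closedBall 0 1), hcompB,
    mem_of_superset (Metric.closedBall_mem_nhds 0 one_pos)
      (fun y hy => subset_closure ⟨y, hy, rfl⟩)⟩
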